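/- arXiv:2211.14665 — 4 statements merged into one kernel-verified Lean document; each statement's English description precedes it below -/
import Mathlib

section
/- Let ℐ be a valuative closed subspace of 𝒢_K with associated minimal valuation v := v_ℐ. Then D_v = C_K(ℐ), i.e. the set of f ∈ 𝒢_K that form an alternating pair with every g ∈ ℐ is exactly the set of f vanishing on the principal units U_v^1. -/
/- Common definitions: Milnor K-theory of fields (possibly modulo a subgroup of `Kˣ`),
its rationalization, the dual space `𝒢_K` with the relation of alternating pairs,
and valuation-theoretic subspaces, following the paper. -/

set_option synthInstance.maxHeartbeats 400000
set_option maxHeartbeats 1000000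

open scoped TensorProduct

namespace Paper

section Milnor

variable (K : Type) [Field K]

/-- The Steinberg relation together with the relation killing a subgroup `T ≤ Kˣ`; used to
present `K^M_*(K|T) := K^M_*(K)/⟨T⟩` as a quotient of the tensor algebra of the
`ℤ`-module `Kˣ`. -/
inductive MilnorRel (T : Subgroup Kˣ) :
    TensorAlgebra ℤ (Additive Kˣ) → TensorAlgebra ℤ (Additive Kˣ) → Prop
  | steinberg (x y : Kˣ) (h : (x : K) + (y : K) = 1) :
      MilnorRel T (TensorAlgebra.ι ℤ (Additive.ofMul x) * TensorAlgebra.ι ℤ (Additive.ofMul y)) 0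
  | subgroup (x : Kˣ) (h : x ∈ T) :
      MilnorRel T (TensorAlgebra.ι ℤ (Additive.ofMul x)) 0

/-- The Milnor K-theory ring modulo a subgroup: `K^M_*(K|T)`.  For `T = ⊥` this is
Milnor K-theory `K^M_*(K)` itself. -/
abbrev MilnorK (T : Subgroup Kˣ) := RingQuot (MilnorRel K T)

/-- The canonical quotient map from the tensor algebra. -/
noncomputable def milnorMk (T : Subgroup Kˣ) :
    TensorAlgebra ℤ (Additive Kˣ) →+* MilnorK K T :=
  RingQuot.mkRingHom (MilnorRel K T)

/-- The symbol `{x}` in degree one of `K^M_*(K|T)`. -/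
noncomputable def symbol (T : Subgroup Kˣ) (x : Kˣ) : MilnorK K T :=
  milnorMk K T (TensorAlgebra.ι ℤ (Additive.ofMul x))

/-- The degree `n` part of `K^M_*(K|T)`, i.e. the image of the degree `n` part of the
tensor algebra. -/
noncomputable def milnorDeg (T : Subgroup Kˣ) (n : ℕ) : AddSubgroup (MilnorK K T) :=
  AddSubgroup.map (milnorMk K T).toAddMonoidHom
    (Submodule.toAddSubgroup
      ((LinearMap.range (TensorAlgebra.ι ℤ (M := Additive Kˣ))) ^ n))

/-- A ring isomorphism between Milnor K-rings is graded if it maps each degree onto the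
corresponding degree. -/
def IsGradedMilnorIso {K L : Type} [Field K] [Field L] {T : Subgroup Kˣ} {S : Subgroup Lˣ}
    (φ : MilnorK K T ≃+* MilnorK L S) : Prop :=
  ∀ n : ℕ, AddSubgroup.map φ.toRingHom.toAddMonoidHom (milnorDeg K T n) = milnorDeg L S n

/-- `𝒦_*(K|T) := ℚ ⊗_ℤ K^M_*(K|T)`. -/
abbrev MilnorKQ (T : Subgroup Kˣ) := ℚ ⊗[ℤ] MilnorK K T

/-- The symbol `{x}` in degree one of `𝒦_*(K|T)`. -/
noncomputable def symbolQ (T : Subgroup Kˣ) (x : Kˣ) : MilnorKQ K T :=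
  1 ⊗ₜ symbol K T x

/-- The degree `n` part of `𝒦_*(K|T)`. -/
noncomputable def milnorDegQ (T : Subgroup Kˣ) (n : ℕ) : Submodule ℚ (MilnorKQ K T) :=
  Submodule.span ℚ
    ((fun a => (1 : ℚ) ⊗ₜ a) ''
      ((milnorMk K T) ''
        ((LinearMap.range (TensorAlgebra.ι ℤ (M := Additive Kˣ))) ^ n : Submodule ℤ _)))

/-- An isomorphism of the graded `ℚ`-algebras `𝒦_*(K|T)` is graded if it maps each degree
onto the corresponding degree. -/
def IsGradedIsoQ {K L : Type} [Field K] [Field L] {T : Subgroup Kˣ} {S : Subgroup Lˣ}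
    (φ : MilnorKQ K T ≃ₐ[ℚ] MilnorKQ L S) : Prop :=
  ∀ n : ℕ, Submodule.map φ.toLinearMap (milnorDegQ K T n) = milnorDegQ L S n

variable {K}

/-- The ring homomorphism `K^M_*(K|T) → K^M_*(L|S)` induced by a field embedding `σ`
with `σ(T) ⊆ S`. -/
noncomputable def milnorMap {L : Type} [Field L] (σ : K →+* L)
    (T : Subgroup Kˣ) (S : Subgroup Lˣ)
    (h : ∀ x : Kˣ, x ∈ T → Units.map (σ : K →* L) x ∈ S) :
    MilnorK K T →+* MilnorK L S :=
  RingQuot.lift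
    ⟨(TensorAlgebra.lift ℤ
        (((milnorMk L S).toAddMonoidHom.comp
          ((TensorAlgebra.ι ℤ (M := Additive Lˣ)).toAddMonoidHom.comp
            (MonoidHom.toAdditive (Units.map (σ : K →* L))))).toIntLinearMap)).toRingHom,
     by
      rintro a b (⟨x, y, hxy⟩ | ⟨x, hx⟩)
      · simp only [AlgHom.toRingHom_eq_coe, RingHom.coe_coe, map_mul, map_zero,
          TensorAlgebra.lift_ι_apply]
        show milnorMk L S (TensorAlgebra.ι ℤ (Additive.ofMul (Units.map (σ : K →* L) x))) *
          milnorMk L S (TensorAlgebra.ι ℤ (Additive.ofMul (Units.map (σ : K →* L) y))) = 0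
        rw [← map_mul]
        have hsum : ((Units.map (σ : K →* L) x : Lˣ) : L) +
            ((Units.map (σ : K →* L) y : Lˣ) : L) = 1 := by
          simpa using congrArg σ hxy
        exact (RingQuot.mkRingHom_rel
          (MilnorRel.steinberg (T := S) _ _ hsum)).trans (map_zero _)
      · simp only [AlgHom.toRingHom_eq_coe, RingHom.coe_coe, map_zero,
          TensorAlgebra.lift_ι_apply]
        show milnorMk L S (TensorAlgebra.ι ℤ (Additive.ofMul (Units.map (σ : K →* L) x))) = 0
        exact (RingQuot.mkRingHom_rel
          (MilnorRel.subgroup (T := S) _ (h x hx))).trans (map_zero _)⟩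

/-- The induced ring homomorphism `𝒦_*(K|T) → 𝒦_*(L|S)`. -/
noncomputable def milnorMapQ {L : Type} [Field L] (σ : K →+* L)
    (T : Subgroup Kˣ) (S : Subgroup Lˣ)
    (h : ∀ x : Kˣ, x ∈ T → Units.map (σ : K →* L) x ∈ S) :
    MilnorKQ K T →+* MilnorKQ L S :=
  (Algebra.TensorProduct.map (AlgHom.id ℤ ℚ) (milnorMap σ T S h).toIntAlgHom).toRingHom

end Milnor

section Dual

variable (K : Type) [Field K]

/-- `𝒢_K := Hom_ℤ(Kˣ, ℚ)`. -/
abbrev GK := Additive Kˣ →ₗ[ℤ] ℚ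

/-- The weak topology on `𝒢_K`: the topology of pointwise convergence, `ℚ` being discrete. -/
noncomputable def gkTopology : TopologicalSpace (GK K) :=
  TopologicalSpace.induced (fun (f : GK K) (x : Additive Kˣ) => f x)
    (@Pi.topologicalSpace _ _ (fun _ => ⊥))

/-- A subspace of `𝒢_K` is closed if it is closed in the weak topology. -/
def IsClosedSubspace (H : Submodule ℚ (GK K)) : Prop :=
  @IsClosed _ (gkTopology K) (H : Set (GK K))

variable {K}

/-- `f, g ∈ 𝒢_K` form an alternating pair: `ℛ_K(f,g)`. -/
def AltPair (f g : GK K) : Prop :=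
  ∀ x y : Kˣ, (x : K) + (y : K) = 1 →
    f (Additive.ofMul x) * g (Additive.ofMul y) = f (Additive.ofMul y) * g (Additive.ofMul x)

variable (K)

/-- `𝒢_{K|T}`: the functionals vanishing on `T`. -/
def GKrel (T : Subgroup Kˣ) : Submodule ℚ (GK K) where
  carrier := {f | ∀ x ∈ T, f (Additive.ofMul x) = 0}
  add_mem' := by intro f g hf hg x hx; simp [hf x hx, hg x hx]
  zero_mem' := by intro x hx; simp
  smul_mem' := by intro c f hf x hx; simp [hf x hx]

/-- The `ℛ_K`-centralizer `C_K(𝒟)` of a subspace `𝒟 ⊆ 𝒢_K`. -/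
def RCentralizer (D : Submodule ℚ (GK K)) : Submodule ℚ (GK K) where
  carrier := {f | ∀ g ∈ D, AltPair f g}
  add_mem' := by
    intro f1 f2 h1 h2 g hg x y hxy
    have e1 := h1 g hg x y hxy
    have e2 := h2 g hg x y hxy
    simp only [LinearMap.add_apply]
    rw [add_mul, add_mul, e1, e2]
  zero_mem' := by intro g hg x y hxy; simp
  smul_mem' := by
    intro c f hf g hg x y hxy
    simp only [LinearMap.smul_apply, smul_eq_mul]
    rw [mul_assoc, mul_assoc, hf g hg x y hxy]

/-- The `ℛ_K`-centre `Z_K(𝒟)` of a subspace `𝒟 ⊆ 𝒢_K`. -/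
def RCentre (D : Submodule ℚ (GK K)) : Submodule ℚ (GK K) :=
  D ⊓ RCentralizer K D

/-- The orthogonal subgroup `ℋ^⊥ ⊆ Kˣ` of a subspace `ℋ ⊆ 𝒢_K`. -/
def perpSubgroup (H : Submodule ℚ (GK K)) : Subgroup Kˣ where
  carrier := {x | ∀ f ∈ H, f (Additive.ofMul x) = 0}
  one_mem' := by
    intro f hf
    show f (Additive.ofMul 1) = 0
    rw [ofMul_one, map_zero]
  mul_mem' := by
    intro x y hx hy f hf
    have : Additive.ofMul (x * y) = Additive.ofMul x + Additive.ofMul y := rfl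
    rw [this, map_add, hx f hf, hy f hf, add_zero]
  inv_mem' := by
    intro x hx f hf
    have : Additive.ofMul x⁻¹ = -Additive.ofMul x := rfl
    rw [this, map_neg, hx f hf, neg_zero]

/-- `I_v := 𝒢_{K|U_v}` for a valuation (given by its valuation subring `A`). -/
noncomputable def Ival (A : ValuationSubring K) : Submodule ℚ (GK K) := GKrel K A.unitGroup

/-- `D_v := 𝒢_{K|U_v^1}` for a valuation (given by its valuation subring `A`). -/
def Dval (A : ValuationSubring K) : Submodule ℚ (GK K) := GKrel K A.principalUnitGroup

/-- `A` is the valuation ring of the minimal valuation `v_ℐ` attached to a valuative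
subspace `ℐ`: one has `ℐ ⊆ I_v`, and `v` is minimal with this property.  Valuations are
ordered by coarsening (`v ≤ w` iff `v` is a coarsening of `w`, i.e. `𝒪_w ⊆ 𝒪_v`), so
minimality of the valuation means maximality of the valuation subring. -/
def IsMinValuationFor (A : ValuationSubring K) (I : Submodule ℚ (GK K)) : Prop :=
  I ≤ Ival K A ∧ ∀ B : ValuationSubring K, I ≤ Ival K B → B ≤ A

/-- The subgroup of `Kˣ` consisting of the units of a subfield `k ⊆ K`. -/
def subfieldUnits (k : Subfield K) : Subgroup Kˣ where
  carrier := {x | (x : K) ∈ k}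
  one_mem' := k.one_mem
  mul_mem' := by intro a b ha hb; exact k.mul_mem ha hb
  inv_mem' := by
    intro a ha
    show ((a⁻¹ : Kˣ) : K) ∈ k
    rw [Units.val_inv_eq_inv_val]
    exact k.inv_mem ha

/-- The valuation `v` (given by its valuation subring `A`) is `T`-visible:
`I_v ∩ 𝒢_{K|T} = Z_K(D_v ∩ 𝒢_{K|T}) ≠ D_v ∩ 𝒢_{K|T}`, and `v = v_ℐ` for
`ℐ = I_v ∩ 𝒢_{K|T}`. -/
def IsVisible (T : Subgroup Kˣ) (A : ValuationSubring K) : Prop :=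
  Ival K A ⊓ GKrel K T = RCentre K (Dval K A ⊓ GKrel K T) ∧
  Ival K A ⊓ GKrel K T ≠ Dval K A ⊓ GKrel K T ∧
  IsMinValuationFor K A (Ival K A ⊓ GKrel K T)

/-- A subgroup of the value group `vK = Kˣ/U_v` of the valuation corresponding to `A` is
represented by a subgroup `H` of `Kˣ` containing `U_v = A.unitGroup`; `H/U_v` is convex in
`vK` iff whenever `x ∈ H` and `0 ≤ v(y) ≤ v(x)`, also `y ∈ H`. -/
def IsConvexInValueGroup (A : ValuationSubring K) (H : Subgroup Kˣ) : Prop :=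
  A.unitGroup ≤ H ∧
    ∀ x y : Kˣ, x ∈ H → (y : K) ∈ A → ((x : K) * (y : K)⁻¹) ∈ A → y ∈ H

/-- The residue field `kv` of the restriction of the valuation to a subfield `k ⊆ K`,
as a subfield of the residue field `Kv`; it is the set of residues of elements
of `k ∩ 𝒪_v` (which is already closed under the field operations). -/
noncomputable def residueSubfield (A : ValuationSubring K) (k : Subfield K) :
    Subfield (IsLocalRing.ResidueField A) :=
  Subfield.closure ((IsLocalRing.residue A) '' {a : A | (a : K) ∈ k})

end Dual

section KQ

variable (K : Type) [Field K]

/-- A subgroup `T ≤ Kˣ` viewed as a `ℤ`-submodule of `Additive Kˣ`. -/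
def subgroupToSubmodule (T : Subgroup Kˣ) : Submodule ℤ (Additive Kˣ) :=
  AddSubgroup.toIntSubmodule (Subgroup.toAddSubgroup T)

/-- `𝒦_{K|T} := ℚ ⊗_ℤ (Kˣ/T) = 𝒦_1(K|T)`. -/
abbrev KQ (T : Subgroup Kˣ) := ℚ ⊗[ℤ] (Additive Kˣ ⧸ subgroupToSubmodule K T)

/-- The class of `x ∈ Kˣ` in `𝒦_{K|T}`; this is the canonical map `Kˣ → 𝒦_{K|T}`. -/
noncomputable def symbQ (T : Subgroup Kˣ) (x : Kˣ) : KQ K T :=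
  (1 : ℚ) ⊗ₜ Submodule.Quotient.mk (Additive.ofMul x)

/-- The map `Kˣ → 𝒦_1(K|T)`, `x ↦ {x}`, as a `ℤ`-linear map on `Additive Kˣ`. -/
noncomputable def symbolQLinear (T : Subgroup Kˣ) : Additive Kˣ →ₗ[ℤ] MilnorKQ K T :=
  ((Algebra.TensorProduct.includeRight :
      MilnorK K T →ₐ[ℤ] MilnorKQ K T).toLinearMap.toAddMonoidHom.comp
    ((milnorMk K T).toAddMonoidHom.comp
      (TensorAlgebra.ι ℤ (M := Additive Kˣ)).toAddMonoidHom)).toIntLinearMap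

/-- The canonical identification map `𝒦_{K|T} = 𝒦_1(K|T) → 𝒦_*(K|T)` onto degree one. -/
noncomputable def KQtoMilnor (T : Subgroup Kˣ) : KQ K T →ₗ[ℚ] MilnorKQ K T :=
  LinearMap.liftBaseChange ℚ <|
    Submodule.liftQ (subgroupToSubmodule K T) (symbolQLinear K T)
      (by
        intro x hx
        have h2 := RingQuot.mkRingHom_rel (MilnorRel.subgroup (T := T) (Additive.toMul x) hx)
        simp only [LinearMap.mem_ker]
        show (Algebra.TensorProduct.includeRight : MilnorK K T →ₐ[ℤ] MilnorKQ K T)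
          (milnorMk K T (TensorAlgebra.ι ℤ x)) = 0
        rw [show milnorMk K T (TensorAlgebra.ι ℤ x) = 0 from h2.trans (map_zero _), map_zero])

/-- A subspace `ℋ ⊆ 𝒦_{K|T}` is Milnor-closed if for every nonzero `s ∈ ℋ` and every
`t ∈ 𝒦_{K|T}` with `{s,t} = 0` in `𝒦_2(K|T)`, one has `t ∈ ℋ`. -/
def MilnorClosed (T : Subgroup Kˣ) (H : Submodule ℚ (KQ K T)) : Prop :=
  ∀ s ∈ H, s ≠ 0 → ∀ t : KQ K T, KQtoMilnor K T s * KQtoMilnor K T t = 0 → t ∈ H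

/-- The projection `ℚ ⊗_ℤ Kˣ → 𝒦_{K|T}`. -/
noncomputable def KQproj (T : Subgroup Kˣ) : (ℚ ⊗[ℤ] Additive Kˣ) →ₗ[ℚ] KQ K T :=
  LinearMap.baseChange ℚ (subgroupToSubmodule K T).mkQ

lemma KQproj_surjective (T : Subgroup Kˣ) : Function.Surjective (KQproj K T) := by
  intro z
  induction z using TensorProduct.induction_on with
  | zero => exact ⟨0, map_zero _⟩
  | tmul a b =>
      obtain ⟨u, hu⟩ := Submodule.Quotient.mk_surjective (subgroupToSubmodule K T) b
      exact ⟨a ⊗ₜ u, by rw [KQproj, LinearMap.baseChange_tmul, Submodule.mkQ_apply, hu]⟩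
  | add x y hx hy =>
      obtain ⟨x', hx'⟩ := hx
      obtain ⟨y', hy'⟩ := hy
      exact ⟨x' + y', by rw [map_add, hx', hy']⟩

/-- The canonical pairing `𝒦_{K|T} × 𝒢_{K|T} → ℚ`.  It takes the correct value
`⟨s, f⟩` whenever `f` vanishes on `T` (in which case the value is independent of the
choice of preimage), and junk values otherwise. -/
noncomputable def gpair (T : Subgroup Kˣ) (f : GK K) (s : KQ K T) : ℚ :=
  (LinearMap.liftBaseChange ℚ f) (Function.surjInv (KQproj_surjective K T) s)

/-- The image of `𝒦_{L|k}` in `𝒦_{K|k}`, i.e. the subspace spanned by the classes of the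
elements of `Lˣ`. -/
noncomputable def subfieldSpan (k : Subfield K) (L : Subfield K) :
    Submodule ℚ (KQ K (subfieldUnits K k)) :=
  Submodule.span ℚ {s | ∃ x : Kˣ, (x : K) ∈ L ∧ s = symbQ K (subfieldUnits K k) x}

end KQ

section FieldTheory

variable (K : Type) [Field K]

/-- `k` is relatively algebraically closed in `K`. -/
def IsRelAlgClosed (k : Subfield K) : Prop := ∀ x : K, IsAlgebraic k x → x ∈ k

/-- The relative algebraic closure of a subfield `M` in `K` (the set of elements of `K`
algebraic over `M`, which is already a subfield). -/
def relAlgClosure (M : Subfield K) : Subfield K :=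
  Subfield.closure {x : K | IsAlgebraic M x}

/-- The transcendence degree `trdeg(L|k)` of an extension of subfields of `K`:
the supremum of the cardinalities of subsets of `L` that are algebraically independent
over `k`.  `trdeg K k ⊤` is `trdeg(K|k)`. -/
noncomputable def trdeg (k L : Subfield K) : Cardinal :=
  ⨆ s : {s : Set K // s ⊆ (L : Set K) ∧ AlgebraicIndependent k ((↑) : s → K)},
    Cardinal.mk s.1

/-- The perfect closure `k^i` of a subfield `k ⊆ K` inside a perfect closure
`iK : K → Ki` of `K` (with respect to the characteristic exponent `p`): the set of
elements with a `p`-power in `iK(k)` (already a subfield). -/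
def subPerfectClosure {Ki : Type} [Field Ki] (iK : K →+* Ki) (k : Subfield K) (p : ℕ) :
    Subfield Ki :=
  Subfield.closure {x : Ki | ∃ n : ℕ, ∃ a : K, a ∈ k ∧ x ^ p ^ n = iK a}

variable {K}

lemma subfield_units_map {L : Type} [Field L] (σ : K →+* L) (k : Subfield K)
    (l : Subfield L) (h : ∀ x ∈ k, σ x ∈ l) :
    ∀ x : Kˣ, x ∈ subfieldUnits K k → Units.map (σ : K →* L) x ∈ subfieldUnits L l :=
  fun x hx => h x hx

lemma mem_subPerfectClosure {Ki : Type} [Field Ki] (iK : K →+* Ki) (k : Subfield K)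
    (p : ℕ) : ∀ x ∈ k, iK x ∈ subPerfectClosure K iK k p :=
  fun x hx => Subfield.subset_closure ⟨0, x, hx, by simp⟩

lemma bot_units_map {L : Type} [Field L] (σ : K →+* L) (S : Subgroup Lˣ) :
    ∀ x : Kˣ, x ∈ (⊥ : Subgroup Kˣ) → Units.map (σ : K →* L) x ∈ S := by
  intro x hx
  rw [Subgroup.mem_bot] at hx
  subst hx
  rw [map_one]
  exact S.one_mem

end FieldTheory


section Statement10Aux

variable {K : Type} [Field K]

private lemma gk_mul (f : GK K) (x y : Kˣ) :
    f (Additive.ofMul (x * y)) = f (Additive.ofMul x) + f (Additive.ofMul y) := by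
  rw [ofMul_mul, map_add]

private lemma gk_neg_one (f : GK K) : f (Additive.ofMul (-1 : Kˣ)) = 0 := by
  have h := gk_mul f (-1 : Kˣ) (-1 : Kˣ)
  rw [show ((-1 : Kˣ) * (-1 : Kˣ)) = 1 by simp, ofMul_one, map_zero] at h
  linarith

private lemma gk_inv (f : GK K) (x : Kˣ) :
    f (Additive.ofMul x⁻¹) = - f (Additive.ofMul x) := by
  have h := gk_mul f x x⁻¹
  rw [mul_inv_cancel, ofMul_one, map_zero] at h
  linarith

private lemma gk_pow (f : GK K) (x : Kˣ) (n : ℕ) :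
    f (Additive.ofMul (x ^ n)) = (n : ℚ) * f (Additive.ofMul x) := by
  induction n with
  | zero => simp [ofMul_one]
  | succ n ih =>
      rw [pow_succ, gk_mul, ih]
      push_cast
      ring

private lemma mem_GKrel_iff {T : Subgroup Kˣ} {f : GK K} :
    f ∈ GKrel K T ↔ ∀ x ∈ T, f (Additive.ofMul x) = 0 := Iff.rfl

private lemma mem_RCentralizer_iff {D : Submodule ℚ (GK K)} {f : GK K} :
    f ∈ RCentralizer K D ↔ ∀ g ∈ D, AltPair f g := Iff.rfl

variable (A : ValuationSubring K)

private lemma val_unit_ne_zero (x : Kˣ) : A.valuation (x : K) ≠ 0 := by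
  simpa using (A.valuation.ne_zero_iff).2 x.ne_zero

private lemma mem_unitGroup_of {x : Kˣ} (h1 : (x : K) ∈ A) (h2 : ((x : K))⁻¹ ∈ A) :
    x ∈ A.unitGroup := by
  rw [ValuationSubring.mem_unitGroup_iff]
  refine le_antisymm ((A.valuation_le_one_iff _).2 h1) ?_
  by_contra hlt
  rw [not_le] at hlt
  exact ((A.valuation.val_lt_one_iff x.ne_zero).1 hlt).not_ge
    ((A.valuation_le_one_iff _).2 h2)

private lemma val_lt_one_of_mem_not_inv {x : Kˣ} (h1 : (x : K) ∈ A)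
    (h2 : ((x : K))⁻¹ ∉ A) : A.valuation (x : K) < 1 := by
  refine lt_of_le_of_ne ((A.valuation_le_one_iff _).2 h1) ?_
  intro h
  exact h2 ((A.valuation_le_one_iff _).1 (by rw [map_inv₀, h, inv_one]))

private lemma inv_mem_of_val_lt_one {x : Kˣ} (h : A.valuation (x : K) < 1) :
    ((x : K))⁻¹ ∉ A := by
  intro hmem
  exact ((A.valuation.val_lt_one_iff x.ne_zero).1 h).not_ge
    ((A.valuation_le_one_iff _).2 hmem)

/-- The easy inclusion: `D_v ⊆ C_K(ℐ)` whenever `ℐ ⊆ I_v`. -/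
private lemma dval_le_centralizer (I : Submodule ℚ (GK K)) (hI : I ≤ Ival K A) :
    Dval K A ≤ RCentralizer K I := by
  intro f hf
  rw [mem_RCentralizer_iff]
  intro g hg x y hxy
  have hf' : ∀ z ∈ A.principalUnitGroup, f (Additive.ofMul z) = 0 := hf
  have hg' : ∀ z ∈ A.unitGroup, g (Additive.ofMul z) = 0 := hI hg
  by_cases hx : (x : K) ∈ A
  · by_cases hxi : ((x : K))⁻¹ ∈ A
    · -- `x` is a unit of `A`
      have hgx : g (Additive.ofMul x) = 0 := hg' x (mem_unitGroup_of A hx hxi)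
      have hy : (y : K) ∈ A := by
        rw [show (y : K) = 1 - (x : K) by linear_combination hxy]
        exact A.sub_mem A.one_mem hx
      by_cases hyi : ((y : K))⁻¹ ∈ A
      · have hgy : g (Additive.ofMul y) = 0 := hg' y (mem_unitGroup_of A hy hyi)
        rw [hgx, hgy, mul_zero, mul_zero]
      · -- `y ∈ m_A`, so `x` is a principal unit
        have hvy : A.valuation (y : K) < 1 := val_lt_one_of_mem_not_inv A hy hyi
        have hxp : x ∈ A.principalUnitGroup := by
          rw [ValuationSubring.mem_principalUnitGroup_iff,
            show (x : K) - 1 = -(y : K) by linear_combination hxy, Valuation.map_neg]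
          exact hvy
        rw [hf' x hxp, hgx, zero_mul, mul_zero]
    · -- `x ∈ m_A`, so `y` is a principal unit
      have hvx : A.valuation (x : K) < 1 := val_lt_one_of_mem_not_inv A hx hxi
      have hyp : y ∈ A.principalUnitGroup := by
        rw [ValuationSubring.mem_principalUnitGroup_iff,
          show (y : K) - 1 = -(x : K) by linear_combination hxy, Valuation.map_neg]
        exact hvx
      rw [hf' y hyp, hg' y (A.principal_units_le_units hyp), mul_zero, zero_mul]
  · -- `v(x) < 0`
    have hxinvA : ((x : K))⁻¹ ∈ A := (A.mem_or_inv_mem (x : K)).resolve_left hx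
    have hvxi : A.valuation ((x : K))⁻¹ < 1 := by
      have h1 : ((x⁻¹ : Kˣ) : K) ∈ A := by
        rw [Units.val_inv_eq_inv_val]; exact hxinvA
      have h2 : (((x⁻¹ : Kˣ) : K))⁻¹ ∉ A := by
        rw [Units.val_inv_eq_inv_val, inv_inv]; exact hx
      have h3 := val_lt_one_of_mem_not_inv A h1 h2
      rwa [Units.val_inv_eq_inv_val] at h3
    have hne : (1 : K) - ((x : K))⁻¹ ≠ 0 := by
      intro h
      have hx1 : ((x : K))⁻¹ = 1 := by linear_combination -h
      rw [hx1] at hvxi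
      simp at hvxi
    set w : Kˣ := Units.mk0 _ hne with hw
    have hwp : w ∈ A.principalUnitGroup := by
      rw [ValuationSubring.mem_principalUnitGroup_iff]
      have : (w : K) - 1 = -((x : K))⁻¹ := by rw [hw]; rw [Units.val_mk0]; ring
      rw [this, Valuation.map_neg]
      exact hvxi
    have hyeq : y = (-1) * x * w := by
      apply Units.ext
      rw [Units.val_mul, Units.val_mul, Units.val_neg, Units.val_one, hw, Units.val_mk0]
      have hx0 : (x : K) ≠ 0 := x.ne_zero
      field_simp
      linear_combination hxy
    have hfy : f (Additive.ofMul y) = f (Additive.ofMul x) := by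
      rw [hyeq, gk_mul, gk_mul, gk_neg_one, hf' w hwp]
      ring
    have hgy : g (Additive.ofMul y) = g (Additive.ofMul x) := by
      rw [hyeq, gk_mul, gk_mul, gk_neg_one, hg' w (A.principal_units_le_units hwp)]
      ring
    rw [hfy, hgy, mul_comm]

/-- The hard inclusion, using minimality of the valuation. -/
private lemma centralizer_le_dval (I : Submodule ℚ (GK K)) (A : ValuationSubring K)
    (hA : IsMinValuationFor K A I) : RCentralizer K I ≤ Dval K A := by
  classical
  intro f hf
  have hf' : ∀ g ∈ I, AltPair f g := hf
  intro u hu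
  -- goal : f (ofMul u) = 0 for u a principal unit
  by_cases hu1 : u = 1
  · rw [hu1, ofMul_one, map_zero]
  have htne : (1 : K) - (u : K) ≠ 0 := by
    intro h
    exact hu1 (Units.ext (by push_cast; linear_combination -h))
  set t : Kˣ := Units.mk0 _ htne with ht
  have htv : A.valuation (t : K) < 1 := by
    have hu' : A.valuation ((u : K) - 1) < 1 := hu
    have : (t : K) = -((u : K) - 1) := by rw [ht]; rw [Units.val_mk0]; ring
    rw [this, Valuation.map_neg]
    exact hu'
  have htA : (t : K) ∈ A := (A.valuation_le_one_iff _).1 htv.le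
  have htiA : ((t : K))⁻¹ ∉ A := inv_mem_of_val_lt_one A htv
  have hsum : (t : K) + (u : K) = 1 := by rw [ht, Units.val_mk0]; ring
  by_cases hex : ∃ g ∈ I, g (Additive.ofMul t) ≠ 0
  · obtain ⟨g, hgI, hgt⟩ := hex
    have halt := hf' g hgI t u hsum
    have hgu : g (Additive.ofMul u) = 0 :=
      (hA.1 hgI) u (A.principal_units_le_units hu)
    rw [hgu, mul_zero] at halt
    exact (mul_eq_zero.mp halt.symm).resolve_right hgt
  push_neg at hex
  by_cases hex2 : ∃ a : Kˣ,
      (A.valuation (a : K) < 1 ∧ A.valuation ((t : K) * ((a : K))⁻¹) < 1) ∧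
        ∃ g ∈ I, g (Additive.ofMul a) ≠ 0
  · -- split `u` into two principal units seen by `ℐ`
    obtain ⟨a, ⟨hva, hvta⟩, g, hgI, hga⟩ := hex2
    have hg' : ∀ z ∈ A.unitGroup, g (Additive.ofMul z) = 0 := hA.1 hgI
    have hpne : (1 : K) - (a : K) ≠ 0 := by
      intro h
      rw [show (a : K) = 1 by linear_combination -h] at hva
      simp at hva
    set p : Kˣ := Units.mk0 _ hpne with hp
    have hpp : p ∈ A.principalUnitGroup := by
      rw [ValuationSubring.mem_principalUnitGroup_iff,
        show (p : K) - 1 = -(a : K) by rw [hp]; rw [Units.val_mk0]; ring,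
        Valuation.map_neg]
      exact hva
    have hsne : (1 : K) - (t : K) * ((a : K))⁻¹ ≠ 0 := by
      intro h
      rw [show (t : K) * ((a : K))⁻¹ = 1 by linear_combination -h] at hvta
      simp at hvta
    set s : Kˣ := Units.mk0 _ hsne with hs
    have hsp : s ∈ A.principalUnitGroup := by
      rw [ValuationSubring.mem_principalUnitGroup_iff,
        show (s : K) - 1 = -((t : K) * ((a : K))⁻¹) by rw [hs]; rw [Units.val_mk0]; ring,
        Valuation.map_neg]
      exact hvta
    set q : Kˣ := (-1) * a * s * p⁻¹ with hq
    have hqv : A.valuation (q : K) < 1 := by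
      have : A.valuation (q : K) = A.valuation (a : K) := by
        rw [hq]
        push_cast
        rw [map_mul, map_mul, map_mul, Valuation.map_neg, Valuation.map_one, one_mul,
          (ValuationSubring.mem_unitGroup_iff _ _).1 (A.principal_units_le_units hsp),
          mul_one, map_inv₀,
          (ValuationSubring.mem_unitGroup_iff _ _).1 (A.principal_units_le_units hpp)]
        simp
      rw [this]; exact hva
    have hrne : (1 : K) - (q : K) ≠ 0 := by
      intro h
      rw [show (q : K) = 1 by linear_combination -h] at hqv
      simp at hqv
    set r : Kˣ := Units.mk0 _ hrne with hr
    have hrp : r ∈ A.principalUnitGroup := by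
      rw [ValuationSubring.mem_principalUnitGroup_iff,
        show (r : K) - 1 = -(q : K) by rw [hr]; rw [Units.val_mk0]; ring,
        Valuation.map_neg]
      exact hqv
    have hgq : g (Additive.ofMul q) = g (Additive.ofMul a) := by
      rw [hq, gk_mul, gk_mul, gk_mul, gk_neg_one, gk_inv,
        hg' s (A.principal_units_le_units hsp), hg' p (A.principal_units_le_units hpp)]
      ring
    have hfp : f (Additive.ofMul p) = 0 := by
      have halt := hf' g hgI a p (by rw [hp, Units.val_mk0]; ring)
      rw [hg' p (A.principal_units_le_units hpp), mul_zero] at halt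
      exact (mul_eq_zero.mp halt.symm).resolve_right hga
    have hfr : f (Additive.ofMul r) = 0 := by
      have halt := hf' g hgI q r (by rw [hr, Units.val_mk0]; ring)
      rw [hg' r (A.principal_units_le_units hrp), mul_zero] at halt
      have := (mul_eq_zero.mp halt.symm).resolve_right (by rw [hgq]; exact hga)
      exact this
    have hueq : u = p * r := by
      apply Units.ext
      have ha0 : (a : K) ≠ 0 := a.ne_zero
      rw [Units.val_mul, hp, hr, Units.val_mk0, Units.val_mk0, hq]
      push_cast [hs, hp, Units.val_mk0]
      field_simp
      linear_combination hsum
    rw [hueq, gk_mul, hfp, hfr, add_zero]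
  · -- impossible: contradicts minimality of the valuation
    exfalso
    push_neg at hex2
    -- the coarsening of `A` obtained by inverting `t`
    set S : Subring K :=
      { carrier := {x : K | ∃ n : ℕ, x * (t : K) ^ n ∈ A}
        one_mem' := ⟨0, by simpa using one_mem A⟩
        zero_mem' := ⟨0, by simpa using zero_mem A⟩
        mul_mem' := by
          rintro x y ⟨n, hn⟩ ⟨m, hm⟩
          refine ⟨n + m, ?_⟩
          have : x * y * (t : K) ^ (n + m) = (x * (t : K) ^ n) * (y * (t : K) ^ m) := by
            rw [pow_add]; ring
          rw [this]
          exact mul_mem hn hm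
        add_mem' := by
          rintro x y ⟨n, hn⟩ ⟨m, hm⟩
          refine ⟨n + m, ?_⟩
          have : (x + y) * (t : K) ^ (n + m) =
              (x * (t : K) ^ n) * (t : K) ^ m + (y * (t : K) ^ m) * (t : K) ^ n := by
            rw [pow_add]; ring
          rw [this]
          exact add_mem (mul_mem hn (pow_mem htA m)) (mul_mem hm (pow_mem htA n))
        neg_mem' := by
          rintro x ⟨n, hn⟩
          refine ⟨n, ?_⟩
          rw [show -x * (t : K) ^ n = -(x * (t : K) ^ n) by ring]
          exact neg_mem hn } with hS
    set B : ValuationSubring K :=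
      ⟨S, fun x => (A.mem_or_inv_mem x).imp (fun h => ⟨0, by simpa using h⟩)
        (fun h => ⟨0, by simpa using h⟩)⟩ with hB
    have hmemB : ∀ x : K, x ∈ B ↔ ∃ n : ℕ, x * (t : K) ^ n ∈ A := fun _ => Iff.rfl
    have hIB : I ≤ Ival K B := by
      intro g hg
      show ∀ x ∈ B.unitGroup, g (Additive.ofMul x) = 0
      intro x hx
      have hgt : g (Additive.ofMul t) = 0 := hex g hg
      -- main claim by induction
      have claim : ∀ n : ℕ, ∀ z : Kˣ, (z : K) ∈ A → ((z : K))⁻¹ * (t : K) ^ n ∈ A →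
          g (Additive.ofMul z) = 0 := by
        intro n
        induction n with
        | zero =>
            intro z hz hzi
            rw [pow_zero, mul_one] at hzi
            exact (hA.1 hg) z (mem_unitGroup_of A hz hzi)
        | succ n ih =>
            intro z hz hzi
            by_cases hz2 : ((z : K))⁻¹ * (t : K) ^ n ∈ A
            · exact ih z hz hz2
            · set w : Kˣ := z * (t⁻¹) ^ n with hwdef
              have hwco : (w : K) = (z : K) * (((t : K)) ^ n)⁻¹ := by
                push_cast [hwdef]; rw [inv_pow]
              have hwA : (w : K) ∈ A := by
                have h1 : (((z : K))⁻¹ * (t : K) ^ n)⁻¹ ∈ A :=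
                  (A.mem_or_inv_mem _).resolve_left hz2
                have : (((z : K))⁻¹ * (t : K) ^ n)⁻¹ = (w : K) := by
                  rw [hwco]; rw [mul_inv, inv_inv]
                rwa [this] at h1
              have hwt : ((w : K))⁻¹ * (t : K) ∈ A := by
                have : ((w : K))⁻¹ * (t : K) = ((z : K))⁻¹ * (t : K) ^ (n + 1) := by
                  rw [hwco, mul_inv, inv_inv, pow_succ]; ring
                rw [this]
                exact hzi
              have hgw : g (Additive.ofMul w) = 0 := by
                by_cases hwi : ((w : K))⁻¹ ∈ A
                · exact (hA.1 hg) w (mem_unitGroup_of A hwA hwi)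
                · by_cases hwt2 : (w : K) * ((t : K))⁻¹ ∈ A
                  · have hmem : (w * t⁻¹ : Kˣ) ∈ A.unitGroup := by
                      apply mem_unitGroup_of A
                      · push_cast; exact hwt2
                      · push_cast
                        rw [mul_inv, inv_inv]
                        exact hwt
                    have h0 := (hA.1 hg) _ hmem
                    rw [gk_mul, gk_inv, hgt] at h0
                    linarith
                  · -- apply the negated existence
                    have hvw : A.valuation (w : K) < 1 := val_lt_one_of_mem_not_inv A hwA hwi
                    have hvtw : A.valuation ((t : K) * ((w : K))⁻¹) < 1 := by
                      have hwt0 : (w : K) * ((t : K))⁻¹ ≠ 0 := by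
                        simp [t.ne_zero, w.ne_zero]
                      have h1 : 1 < A.valuation ((w : K) * ((t : K))⁻¹) := by
                        by_contra hle
                        rw [not_lt] at hle
                        exact hwt2 ((A.valuation_le_one_iff _).1 hle)
                      have := (A.valuation.one_lt_val_iff hwt0).1 h1
                      rwa [mul_inv, inv_inv, mul_comm] at this
                    exact hex2 w ⟨hvw, hvtw⟩ g hg
              have hzeq : z = w * t ^ n := by
                rw [hwdef, inv_pow, mul_assoc, inv_mul_cancel, mul_one]
              rw [hzeq, gk_mul, gk_pow, hgt, hgw]
              ring
      -- reduce `x ∈ B.unitGroup` to the claim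
      have hx1 : (x : K) ∈ B := by
        rw [← B.valuation_le_one_iff]
        exact le_of_eq hx
      have hx2 : ((x : K))⁻¹ ∈ B := by
        rw [← B.valuation_le_one_iff, map_inv₀]
        rw [ValuationSubring.mem_unitGroup_iff] at hx
        rw [hx, inv_one]
      obtain ⟨n, hn⟩ := (hmemB _).1 hx1
      obtain ⟨m, hm⟩ := (hmemB _).1 hx2
      have h1 : ((x * t ^ n : Kˣ) : K) ∈ A := by push_cast; exact hn
      have h2 : (((x * t ^ n : Kˣ) : K))⁻¹ * (t : K) ^ (n + m) ∈ A := by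
        have heq : (((x * t ^ n : Kˣ) : K))⁻¹ * (t : K) ^ (n + m)
            = ((x : K))⁻¹ * (t : K) ^ m := by
          have ht0 : ((t : K) ^ n) ≠ 0 := pow_ne_zero _ t.ne_zero
          push_cast
          rw [pow_add, mul_inv]
          field_simp
        rw [heq]; exact hm
      have h3 := claim (n + m) (x * t ^ n) h1 h2
      rw [gk_mul, gk_pow, hex g hg] at h3
      linarith
    have hBA := hA.2 B hIB
    have : ((t : K))⁻¹ ∈ A := hBA (by
      rw [hmemB]
      exact ⟨1, by rw [pow_one, inv_mul_cancel₀ t.ne_zero]; exact A.one_mem⟩)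
    exact htiA this

end Statement10Aux

/-- If `ℐ` is a valuative closed subspace with associated minimal
valuation `v = v_ℐ`, then `D_v = C_K(ℐ)`. -/
theorem centralizer_of_valuative (K : Type) [Field K] (I : Submodule ℚ (GK K))
    (hcl : IsClosedSubspace K I) (A : ValuationSubring K)
    (hA : IsMinValuationFor K A I) :
    Dval K A = RCentralizer K I :=
  le_antisymm (dval_le_centralizer A I hA.1) (centralizer_le_dval I A hA)

end Paper
end

section
/- Let k be a subfield of K and T a subgroup of K^× contained in k^×. Assume trdeg(K|k) ≥ 1 and let v be a valuation of K such that 𝒢_{K|T} ⊆ D_v. Then v is the trivial valuation. -/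
/- Common definitions: Milnor K-theory of fields (possibly modulo a subgroup of `Kˣ`),
its rationalization, the dual space `𝒢_K` with the relation of alternating pairs,
and valuation-theoretic subspaces, following the paper. -/

set_option synthInstance.maxHeartbeats 400000
set_option maxHeartbeats 1000000

open scoped TensorProduct

namespace Paper

/-- If every functional vanishing on `T` vanishes at `u`, then some positive power of `u`
lies in `T`. -/
private lemma aux_exists_pow_mem {K : Type} [Field K] (T : Subgroup Kˣ) (u : Kˣ)
    (hu : ∀ f : GK K, f ∈ GKrel K T → f (Additive.ofMul u) = 0) :
    ∃ n : ℕ, 0 < n ∧ u ^ n ∈ T := by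
  by_contra hc
  push_neg at hc
  set N : Submodule ℤ (Additive Kˣ) := subgroupToSubmodule K T with hN
  set ub : Additive Kˣ ⧸ N := Submodule.Quotient.mk (Additive.ofMul u) with hub
  have hns : ∀ n : ℤ, n • ub = 0 → n = 0 := by
    intro n hn
    by_contra hn0
    rw [hub, ← Submodule.Quotient.mk_smul, Submodule.Quotient.mk_eq_zero] at hn
    have hmem : u ^ n ∈ T := by
      have : Additive.toMul (n • Additive.ofMul u) ∈ T := by
        exact hn
      simpa using this
    have hmem' : u ^ (n.natAbs : ℤ) ∈ T := by
      rcases Int.natAbs_eq n with he | he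
      · rw [← he]; exact hmem
      · rw [he] at hmem; simpa using T.inv_mem hmem
    rw [zpow_natCast] at hmem'
    exact hc n.natAbs (Int.natAbs_pos.mpr hn0) hmem'
  have hinj : Function.Injective (LinearMap.toSpanSingleton ℤ (Additive Kˣ ⧸ N) ub) := by
    intro a b hab
    have hab' : (a - b) • ub = 0 := by
      rw [sub_smul, sub_eq_zero]
      simpa [LinearMap.toSpanSingleton_apply] using hab
    have := hns (a - b) hab'
    omega
  obtain ⟨g, hg⟩ := (Module.Baer.of_divisible ℚ).extension_property
    (LinearMap.toSpanSingleton ℤ (Additive Kˣ ⧸ N) ub) hinj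
    (LinearMap.toSpanSingleton ℤ ℚ 1)
  have hg1 : g ub = 1 := by
    have := LinearMap.congr_fun hg 1
    simpa [LinearMap.toSpanSingleton_apply] using this
  have hfT : (g ∘ₗ N.mkQ : GK K) ∈ GKrel K T := by
    intro x hx
    show g (N.mkQ (Additive.ofMul x)) = 0
    have hx' : Additive.ofMul x ∈ N := by
      exact hx
    rw [Submodule.mkQ_apply, (Submodule.Quotient.mk_eq_zero N).2 hx', map_zero]
  have := hu (g ∘ₗ N.mkQ) hfT
  have h1 : g (N.mkQ (Additive.ofMul u)) = 1 := hg1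
  rw [show ((g ∘ₗ N.mkQ : GK K) (Additive.ofMul u)) = g (N.mkQ (Additive.ofMul u)) from rfl,
    h1] at this
  exact one_ne_zero this

/-- Every element of the maximal ideal of `A` is algebraic over `k`. -/
private lemma aux_isAlgebraic {K : Type} [Field K] (k : Subfield K) (T : Subgroup Kˣ)
    (hT : T ≤ subfieldUnits K k) (A : ValuationSubring K)
    (h : GKrel K T ≤ Dval K A) (y : K) (hy : A.valuation y < 1) :
    IsAlgebraic k y := by
  rcases eq_or_ne y 0 with rfl | hy0
  · exact isAlgebraic_zero
  have h1y : (1 : K) + y ≠ 0 := by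
    intro h0
    have hy1 : y = -1 := by linear_combination h0
    rw [hy1, Valuation.map_neg, Valuation.map_one] at hy
    exact lt_irrefl _ hy
  set u : Kˣ := Units.mk0 (1 + y) h1y with hudef
  have humem : u ∈ A.principalUnitGroup := by
    rw [ValuationSubring.mem_principalUnitGroup_iff]
    simpa [hudef] using hy
  have hvan : ∀ f : GK K, f ∈ GKrel K T → f (Additive.ofMul u) = 0 := fun f hf =>
    h hf u humem
  obtain ⟨n, hn, hnT⟩ := aux_exists_pow_mem T u hvan
  have hk : ((u : K)) ^ n ∈ k := by
    have := hT hnT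
    have h' : ((u ^ n : Kˣ) : K) ∈ k := this
    rw [Units.val_pow_eq_pow_val] at h'
    exact h'
  have halgpow : IsAlgebraic k ((u : K) ^ n) := by
    have : IsAlgebraic k (algebraMap k K ⟨(u : K) ^ n, hk⟩) := isAlgebraic_algebraMap _
    exact this
  have halg : IsAlgebraic k ((u : K)) := halgpow.of_pow hn
  have hone : IsAlgebraic k (1 : K) := isAlgebraic_one
  have hsub : IsAlgebraic k ((u : K) - 1) :=
    isAlgebraic_iff_isIntegral.mpr
      ((isAlgebraic_iff_isIntegral.mp halg).sub (isAlgebraic_iff_isIntegral.mp hone))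
  simpa [hudef] using hsub

/-- There is an element of `K` transcendental over `k`. -/
private lemma aux_exists_transcendental {K : Type} [Field K] (k : Subfield K)
    (htr : 1 ≤ trdeg K k ⊤) : ∃ t : K, Transcendental k t := by
  by_contra hc
  push_neg at hc
  haveI : Nonempty {s : Set K // s ⊆ ((⊤ : Subfield K) : Set K) ∧
      AlgebraicIndependent k ((↑) : s → K)} :=
    ⟨⟨(∅ : Set K), Set.empty_subset _, algebraicIndependent_empty⟩⟩
  have hzero : ∀ s : {s : Set K // s ⊆ ((⊤ : Subfield K) : Set K) ∧
      AlgebraicIndependent k ((↑) : s → K)}, Cardinal.mk s.1 = 0 := by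
    intro s
    rw [Cardinal.mk_eq_zero_iff]
    exact ⟨fun x => hc x.1 (s.2.2.transcendental x)⟩
  have hle : trdeg K k ⊤ ≤ 0 := ciSup_le' fun s => le_of_eq (hzero s)
  exact absurd (htr.trans hle) (by simp)


/-- If `T ≤ k^×` for a subfield `k` with `trdeg(K|k) ≥ 1` and `v` is a
valuation with `𝒢_{K|T} ⊆ D_v`, then `v` is trivial (its valuation ring is all of `K`). -/
theorem trivial_of_GKrel_le_Dval (K : Type) [Field K] (k : Subfield K) (T : Subgroup Kˣ)
    (hT : T ≤ subfieldUnits K k) (htr : 1 ≤ trdeg K k ⊤)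
    (A : ValuationSubring K) (h : GKrel K T ≤ Dval K A) :
    A = ⊤ := by
  by_contra hA
  obtain ⟨x, hx⟩ : ∃ x : K, x ∉ A := by
    by_contra hc
    push_neg at hc
    exact hA (by ext y; exact iff_of_true (hc y) (ValuationSubring.mem_top _))
  have hvx : 1 < A.valuation x := by
    rw [← ValuationSubring.valuation_le_one_iff] at hx
    exact not_le.mp hx
  have hxne : x ≠ 0 := by
    intro h0
    rw [h0, Valuation.map_zero] at hvx
    exact absurd hvx (by simp)
  have hπ : A.valuation x⁻¹ < 1 := by
    rw [map_inv₀]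
    exact (inv_lt_one₀ (zero_lt_one.trans hvx)).mpr hvx
  have hπne : x⁻¹ ≠ 0 := inv_ne_zero hxne
  obtain ⟨t, ht⟩ := aux_exists_transcendental k htr
  obtain ⟨s, hs1, hstr⟩ : ∃ s : K, A.valuation s ≤ 1 ∧ Transcendental k s := by
    rcases le_or_gt (A.valuation t) 1 with hts | hts
    · exact ⟨t, hts, ht⟩
    · refine ⟨t⁻¹, ?_, ?_⟩
      · rw [map_inv₀]
        exact ((inv_lt_one₀ (zero_lt_one.trans hts)).mpr hts).le
      · intro halg
        have htne : t ≠ 0 := by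
          intro h0
          rw [h0, Valuation.map_zero] at hts
          exact absurd hts (by simp)
        exact ht (by simpa using halg.inv)
  have hπalg : IsAlgebraic k x⁻¹ := aux_isAlgebraic k T hT A h x⁻¹ hπ
  have hsπ : A.valuation (s * x⁻¹) < 1 := by
    rw [Valuation.map_mul]
    calc A.valuation s * A.valuation x⁻¹ ≤ 1 * A.valuation x⁻¹ := mul_le_mul_left hs1 _
      _ = A.valuation x⁻¹ := one_mul _
      _ < 1 := hπ
  have hsπalg : IsAlgebraic k (s * x⁻¹) := aux_isAlgebraic k T hT A h (s * x⁻¹) hsπ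
  have hinvalg : IsAlgebraic k ((x⁻¹)⁻¹) := hπalg.inv
  have hsalg : IsAlgebraic k (s * x⁻¹ * (x⁻¹)⁻¹) :=
    isAlgebraic_iff_isIntegral.mpr
      ((isAlgebraic_iff_isIntegral.mp hsπalg).mul (isAlgebraic_iff_isIntegral.mp hinvalg))
  refine hstr ?_
  simpa [mul_assoc, inv_mul_cancel₀ hxne] using hsalg


end Paper
end

section
/- Let v be a valuation on a field K. The canonical graded ℚ-algebra map from the exterior algebra ∧^*_ℚ(𝒦_{K|U_v}) to 𝒦_*(K|U_v), given by the identity in degree one, is an isomorphism. Equivalently, ℚ ⊗_ℤ K^M_*(K|U_v) is the exterior algebra over ℚ on ℚ ⊗_ℤ (vK), where vK = K^×/U_v is the value group. -/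
/- Common definitions: Milnor K-theory of fields (possibly modulo a subgroup of `Kˣ`),
its rationalization, the dual space `𝒢_K` with the relation of alternating pairs,
and valuation-theoretic subspaces, following the paper. -/

set_option synthInstance.maxHeartbeats 400000
set_option maxHeartbeats 1000000

open scoped TensorProduct

namespace Paper

section Basics
variable {K : Type} [Field K] (T : Subgroup Kˣ)

lemma symbol_mul (x y : Kˣ) : symbol K T (x * y) = symbol K T x + symbol K T y := by
  unfold symbol
  rw [show Additive.ofMul (x * y) = Additive.ofMul x + Additive.ofMul y from rfl, map_add,
    map_add]

lemma symbol_one : symbol K T (1 : Kˣ) = 0 := by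
  unfold symbol
  rw [show Additive.ofMul (1 : Kˣ) = 0 from rfl, map_zero, map_zero]

lemma symbol_inv (x : Kˣ) : symbol K T x⁻¹ = - symbol K T x := by
  have := symbol_mul T x x⁻¹
  rw [mul_inv_cancel, symbol_one] at this
  exact eq_neg_of_add_eq_zero_right this.symm

lemma steinberg (x y : Kˣ) (h : (x : K) + (y : K) = 1) :
    symbol K T x * symbol K T y = 0 := by
  have h2 := RingQuot.mkRingHom_rel (MilnorRel.steinberg (T := T) x y h)
  unfold symbol milnorMk
  rw [← map_mul]
  exact h2.trans (map_zero _)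

lemma symbol_mul_neg_self (x : Kˣ) : symbol K T x * symbol K T (-x) = 0 := by
  by_cases hx : x = 1
  · rw [hx, symbol_one]
    exact zero_mul _
  · have hxK : (x : K) ≠ 1 := fun h => hx (Units.ext h)
    have h1 : (1 : K) - (x : K) ≠ 0 := sub_ne_zero.mpr hxK.symm
    have h2 : (1 : K) - ((x : K))⁻¹ ≠ 0 := by
      rw [sub_ne_zero]
      intro h
      exact hxK (by rw [← inv_inv (x : K), ← h, inv_one])
    set u : Kˣ := Units.mk0 _ h1 with hu
    set w : Kˣ := Units.mk0 _ h2 with hw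
    have s1 : symbol K T x * symbol K T u = 0 := by
      apply steinberg
      show (x : K) + (1 - (x : K)) = 1
      ring
    have s2 : symbol K T x * symbol K T w = 0 := by
      have hst := steinberg T x⁻¹ w (by
        show ((x⁻¹ : Kˣ) : K) + (1 - ((x : K))⁻¹) = 1
        rw [Units.val_inv_eq_inv_val]; ring)
      rw [symbol_inv] at hst
      exact neg_eq_zero.mp ((neg_mul (symbol K T x) (symbol K T w)).symm.trans hst)
    have hmul : (-x) * w = u := by
      apply Units.ext
      show (-(x : K)) * (1 - ((x : K))⁻¹) = 1 - (x : K)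
      have hx0 : (x : K) ≠ 0 := Units.ne_zero x
      field_simp
      ring
    have hexp : symbol K T x * (symbol K T (-x) + symbol K T w) = 0 := by
      rw [← symbol_mul, hmul]; exact s1
    have hsum : symbol K T x * symbol K T (-x) + symbol K T x * symbol K T w = 0 :=
      (mul_add _ _ _).symm.trans hexp
    rw [s2] at hsum
    exact (add_zero _).symm.trans hsum

lemma symbol_neg (x : Kˣ) : symbol K T (-x) = symbol K T (-1 : Kˣ) + symbol K T x := by
  rw [show (-x : Kˣ) = (-1) * x by simp, symbol_mul]

lemma symbol_anticomm (x y : Kˣ) :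
    symbol K T x * symbol K T y + symbol K T y * symbol K T x = 0 := by
  set a := symbol K T x with ha
  set b := symbol K T y with hb
  set c := symbol K T (-1 : Kˣ) with hc
  have h1 : (a + b) * (c + (a + b)) = 0 := by
    have h := symbol_mul_neg_self T (x * y)
    rwa [symbol_neg, symbol_mul] at h
  have h2 : a * (c + a) = 0 := by
    have h := symbol_mul_neg_self T x
    rwa [symbol_neg] at h
  have h3 : b * (c + b) = 0 := by
    have h := symbol_mul_neg_self T y
    rwa [symbol_neg] at h
  have key : a * b + b * a = (a + b) * (c + (a + b)) - a * (c + a) - b * (c + b) := by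
    noncomm_ring
  rw [key, h1, h2, h3]
  simp

end Basics

section QLevel
variable {K : Type} [Field K] (T : Subgroup Kˣ)

lemma tmul_one_smul (q : ℚ) (m : Additive Kˣ ⧸ subgroupToSubmodule K T) :
    (q ⊗ₜ[ℤ] m : KQ K T) = q • ((1 : ℚ) ⊗ₜ[ℤ] m) := by
  rw [TensorProduct.smul_tmul', smul_eq_mul, mul_one]

lemma KQtoMilnor_symbQ (x : Kˣ) :
    KQtoMilnor K T (symbQ K T x) = (1 : ℚ) ⊗ₜ[ℤ] symbol K T x := by
  have h : KQtoMilnor K T (symbQ K T x)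
      = (1 : ℚ) • ((1 : ℚ) ⊗ₜ[ℤ] symbol K T x) := rfl
  rw [h, one_smul]

lemma span_symbQ : Submodule.span ℚ (Set.range (symbQ K T)) = ⊤ := by
  rw [Submodule.eq_top_iff']
  intro z
  induction z using TensorProduct.induction_on with
  | zero => exact Submodule.zero_mem _
  | add a b ha hb => exact Submodule.add_mem _ ha hb
  | tmul q m =>
      obtain ⟨u, rfl⟩ := Submodule.Quotient.mk_surjective _ m
      rw [tmul_one_smul]
      exact Submodule.smul_mem _ q (Submodule.subset_span ⟨Additive.toMul u, rfl⟩)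

lemma KQtoMilnor_anticomm (s t : KQ K T) :
    KQtoMilnor K T s * KQtoMilnor K T t + KQtoMilnor K T t * KQtoMilnor K T s = 0 := by
  set B := LinearMap.mul ℚ (MilnorKQ K T) with hB
  set Bil : MilnorKQ K T →ₗ[ℚ] MilnorKQ K T →ₗ[ℚ] MilnorKQ K T := B + B.flip with hBil
  set G := Bil.compl₁₂ (KQtoMilnor K T) (KQtoMilnor K T) with hG
  have hzero : G = 0 := by
    apply LinearMap.ext_on (span_symbQ T)
    rintro _ ⟨x, rfl⟩
    apply LinearMap.ext_on (span_symbQ T)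
    rintro _ ⟨y, rfl⟩
    show Bil (KQtoMilnor K T (symbQ K T x)) (KQtoMilnor K T (symbQ K T y)) = 0
    rw [KQtoMilnor_symbQ, KQtoMilnor_symbQ]
    show ((1 : ℚ) ⊗ₜ[ℤ] symbol K T x : MilnorKQ K T) * ((1 : ℚ) ⊗ₜ[ℤ] symbol K T y)
        + ((1 : ℚ) ⊗ₜ[ℤ] symbol K T y) * ((1 : ℚ) ⊗ₜ[ℤ] symbol K T x) = 0
    rw [Algebra.TensorProduct.tmul_mul_tmul, Algebra.TensorProduct.tmul_mul_tmul, one_mul,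
      ← TensorProduct.tmul_add, symbol_anticomm, TensorProduct.tmul_zero]
  have hst : G s t = 0 := by rw [hzero]; rfl
  exact hst

lemma KQtoMilnor_sq (s : KQ K T) : KQtoMilnor K T s * KQtoMilnor K T s = 0 := by
  have h := KQtoMilnor_anticomm T s s
  have h2 : (2 : ℚ) • (KQtoMilnor K T s * KQtoMilnor K T s) = 0 := by
    rw [two_smul]; exact h
  simpa using h2

lemma symbQ_one : symbQ K T (1 : Kˣ) = 0 := by
  unfold symbQ
  rw [show Additive.ofMul (1 : Kˣ) = 0 from rfl, Submodule.Quotient.mk_zero,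
    TensorProduct.tmul_zero]

lemma symbQ_mul (x y : Kˣ) : symbQ K T (x * y) = symbQ K T x + symbQ K T y := by
  unfold symbQ
  rw [show Additive.ofMul (x * y) = Additive.ofMul x + Additive.ofMul y from rfl,
    Submodule.Quotient.mk_add, TensorProduct.tmul_add]

lemma symbQ_inv (x : Kˣ) : symbQ K T x⁻¹ = - symbQ K T x := by
  have h := symbQ_mul T x x⁻¹
  rw [mul_inv_cancel, symbQ_one] at h
  exact eq_neg_of_add_eq_zero_right h.symm

lemma symbQ_zero_of_mem (x : Kˣ) (hx : x ∈ T) : symbQ K T x = 0 := by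
  unfold symbQ
  rw [(Submodule.Quotient.mk_eq_zero _).mpr hx, TensorProduct.tmul_zero]

end QLevel

section Val
variable {K : Type} [Field K]

lemma val_eq_of_steinberg (A : ValuationSubring K) (x y : Kˣ)
    (h : (x : K) + (y : K) = 1) (hx : x ∉ A.unitGroup) (hy : y ∉ A.unitGroup) :
    x * y⁻¹ ∈ A.unitGroup := by
  have hx1 : A.valuation (x : K) ≠ 1 := fun h' => hx ((A.mem_unitGroup_iff x).mpr h')
  have hy1 : A.valuation (y : K) ≠ 1 := fun h' => hy ((A.mem_unitGroup_iff y).mpr h')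
  have hyx : (y : K) = 1 + -(x : K) := by rw [← h]; ring
  have hveq : A.valuation (y : K) = A.valuation (x : K) := by
    rcases lt_trichotomy (A.valuation (x : K)) 1 with hlt | heq | hgt
    · exfalso
      apply hy1
      rw [hyx]
      have hneg : A.valuation (-(x : K)) < A.valuation (1 : K) := by
        rw [Valuation.map_neg, Valuation.map_one]; exact hlt
      rw [Valuation.map_add_eq_of_lt_left _ hneg, Valuation.map_one]
    · exact absurd heq hx1
    · rw [hyx]
      have hneg : A.valuation (1 : K) < A.valuation (-(x : K)) := by
        rw [Valuation.map_neg, Valuation.map_one]; exact hgt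
      rw [Valuation.map_add_eq_of_lt_right _ hneg, Valuation.map_neg]
  rw [A.mem_unitGroup_iff]
  have hx0 : A.valuation (x : K) ≠ 0 := by
    rw [Valuation.ne_zero_iff]
    exact Units.ne_zero x
  rw [show ((x * y⁻¹ : Kˣ) : K) = (x : K) * ((y : K))⁻¹ by
    rw [Units.val_mul, Units.val_inv_eq_inv_val]]
  rw [Valuation.map_mul, map_inv₀, hveq, mul_inv_cancel₀ hx0]

lemma iota_steinberg (A : ValuationSubring K) (x y : Kˣ) (h : (x : K) + (y : K) = 1) :
    ExteriorAlgebra.ι ℚ (symbQ K A.unitGroup x) *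
      ExteriorAlgebra.ι ℚ (symbQ K A.unitGroup y) = 0 := by
  by_cases hx : x ∈ A.unitGroup
  · rw [symbQ_zero_of_mem _ _ hx, map_zero]
    exact zero_mul _
  by_cases hy : y ∈ A.unitGroup
  · rw [symbQ_zero_of_mem _ _ hy, map_zero]
    exact mul_zero _
  have hmem := val_eq_of_steinberg A x y h hx hy
  have heq : symbQ K A.unitGroup x = symbQ K A.unitGroup y := by
    have h0 := symbQ_zero_of_mem _ _ hmem
    rw [symbQ_mul, symbQ_inv] at h0
    exact add_neg_eq_zero.mp h0
  rw [heq]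
  exact ExteriorAlgebra.ι_sq_zero _

end Val

section Maps
variable {K : Type} [Field K]

/-- The canonical map `Kˣ → 𝒦_{K|T}` as a `ℤ`-linear map. -/
noncomputable def natSymb (T : Subgroup Kˣ) : Additive Kˣ →ₗ[ℤ] KQ K T :=
  (TensorProduct.mk ℤ ℚ (Additive Kˣ ⧸ subgroupToSubmodule K T) 1).comp
    (subgroupToSubmodule K T).mkQ

/-- The map from the tensor algebra to the exterior algebra. -/
noncomputable def gona (T : Subgroup Kˣ) :
    TensorAlgebra ℤ (Additive Kˣ) →ₐ[ℤ] ExteriorAlgebra ℚ (KQ K T) :=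
  TensorAlgebra.lift ℤ
    (((ExteriorAlgebra.ι ℚ (M := KQ K T)).restrictScalars ℤ).comp (natSymb T))

/-- The inverse ring homomorphism `K^M_*(K|U_v) → ∧(𝒦_{K|U_v})`. -/
noncomputable def gRing (A : ValuationSubring K) :
    MilnorK K A.unitGroup →+* ExteriorAlgebra ℚ (KQ K A.unitGroup) :=
  RingQuot.lift ⟨(gona A.unitGroup).toRingHom, by
    rintro a b (⟨x, y, hxy⟩ | ⟨x, hx⟩)
    · simp only [AlgHom.toRingHom_eq_coe, RingHom.coe_coe, map_mul, map_zero,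
        TensorAlgebra.lift_ι_apply, gona]
      exact iota_steinberg A x y hxy
    · simp only [AlgHom.toRingHom_eq_coe, RingHom.coe_coe, map_zero,
        TensorAlgebra.lift_ι_apply, gona]
      show ExteriorAlgebra.ι ℚ (symbQ K A.unitGroup x) = 0
      rw [symbQ_zero_of_mem _ _ hx, map_zero]⟩

/-- The inverse `ℚ`-algebra homomorphism `𝒦_*(K|U_v) → ∧(𝒦_{K|U_v})`. -/
noncomputable def gAlg (A : ValuationSubring K) :
    MilnorKQ K A.unitGroup →ₐ[ℚ] ExteriorAlgebra ℚ (KQ K A.unitGroup) :=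
  Algebra.TensorProduct.lift (Algebra.ofId ℚ _) (gRing A).toIntAlgHom
    (fun q y => Algebra.commutes q ((gRing A).toIntAlgHom y))

/-- The forward `ℚ`-algebra homomorphism. -/
noncomputable def eAlg (T : Subgroup Kˣ) :
    ExteriorAlgebra ℚ (KQ K T) →ₐ[ℚ] MilnorKQ K T :=
  ExteriorAlgebra.lift ℚ ⟨KQtoMilnor K T, KQtoMilnor_sq T⟩

lemma eAlg_ι (T : Subgroup Kˣ) (s : KQ K T) :
    eAlg T (ExteriorAlgebra.ι ℚ s) = KQtoMilnor K T s :=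
  ExteriorAlgebra.lift_ι_apply _ _ _ _

lemma gAlg_tmul_symbol (A : ValuationSubring K) (x : Kˣ) :
    gAlg A ((1 : ℚ) ⊗ₜ[ℤ] symbol K A.unitGroup x)
      = ExteriorAlgebra.ι ℚ (symbQ K A.unitGroup x) := by
  unfold gAlg
  erw [Algebra.TensorProduct.lift_tmul]
  rw [map_one, one_mul]
  show gRing A (symbol K A.unitGroup x) = _
  unfold gRing symbol milnorMk
  rw [RingQuot.lift_mkRingHom_apply]
  show gona A.unitGroup (TensorAlgebra.ι ℤ (Additive.ofMul x)) = _
  unfold gona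
  rw [TensorAlgebra.lift_ι_apply]
  rfl

lemma gAlg_KQtoMilnor (A : ValuationSubring K) (s : KQ K A.unitGroup) :
    gAlg A (KQtoMilnor K A.unitGroup s) = ExteriorAlgebra.ι ℚ s := by
  have h : (gAlg A).toLinearMap.comp (KQtoMilnor K A.unitGroup)
      = ExteriorAlgebra.ι ℚ (M := KQ K A.unitGroup) := by
    apply LinearMap.ext_on (span_symbQ A.unitGroup)
    rintro _ ⟨x, rfl⟩
    show gAlg A (KQtoMilnor K A.unitGroup (symbQ K A.unitGroup x))
        = ExteriorAlgebra.ι ℚ (symbQ K A.unitGroup x)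
    rw [KQtoMilnor_symbQ, gAlg_tmul_symbol]
  exact DFunLike.congr_fun h s

lemma eAlg_gAlg (A : ValuationSubring K) (z : MilnorKQ K A.unitGroup) :
    eAlg A.unitGroup (gAlg A z) = z := by
  have hK : ∀ b : MilnorK K A.unitGroup,
      eAlg A.unitGroup (gAlg A ((1 : ℚ) ⊗ₜ[ℤ] b)) = (1 : ℚ) ⊗ₜ[ℤ] b := by
    set ψ₁ : MilnorK K A.unitGroup →+* MilnorKQ K A.unitGroup :=
      ((eAlg A.unitGroup).toRingHom.comp (gAlg A).toRingHom).comp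
        (Algebra.TensorProduct.includeRight (R := ℤ) (A := ℚ)
          (B := MilnorK K A.unitGroup)).toRingHom with hψ₁
    set ψ₂ : MilnorK K A.unitGroup →+* MilnorKQ K A.unitGroup :=
      (Algebra.TensorProduct.includeRight (R := ℤ) (A := ℚ)
        (B := MilnorK K A.unitGroup)).toRingHom with hψ₂
    have hcomp : ψ₁.comp (RingQuot.mkRingHom (MilnorRel K A.unitGroup))
        = ψ₂.comp (RingQuot.mkRingHom (MilnorRel K A.unitGroup)) := by
      set φ₁ := ψ₁.comp (RingQuot.mkRingHom (MilnorRel K A.unitGroup)) with hφ₁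
      set φ₂ := ψ₂.comp (RingQuot.mkRingHom (MilnorRel K A.unitGroup)) with hφ₂
      have halg : RingHom.toIntAlgHom (R := TensorAlgebra ℤ (Additive Kˣ))
            (S := MilnorKQ K A.unitGroup) φ₁
          = RingHom.toIntAlgHom (R := TensorAlgebra ℤ (Additive Kˣ))
            (S := MilnorKQ K A.unitGroup) φ₂ := by
        apply TensorAlgebra.hom_ext
        apply LinearMap.ext
        intro u
        show φ₁ (TensorAlgebra.ι ℤ u) = φ₂ (TensorAlgebra.ι ℤ u)
        show eAlg A.unitGroup (gAlg A ((1 : ℚ) ⊗ₜ[ℤ]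
            milnorMk K A.unitGroup (TensorAlgebra.ι ℤ u)))
          = (1 : ℚ) ⊗ₜ[ℤ] milnorMk K A.unitGroup (TensorAlgebra.ι ℤ u)
        have hx : milnorMk K A.unitGroup (TensorAlgebra.ι ℤ u)
            = symbol K A.unitGroup (Additive.toMul u) := rfl
        rw [hx, gAlg_tmul_symbol, eAlg_ι, KQtoMilnor_symbQ]
      exact RingHom.ext fun a => DFunLike.congr_fun halg a
    have := RingQuot.ringQuot_ext ψ₁ ψ₂ hcomp
    intro b
    exact DFunLike.congr_fun this b
  induction z using TensorProduct.induction_on with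
  | zero => rw [map_zero, map_zero]
  | add a b ha hb => rw [map_add, map_add, ha, hb]
  | tmul q b =>
      have h1 : (q ⊗ₜ[ℤ] b : MilnorKQ K A.unitGroup) = q • ((1 : ℚ) ⊗ₜ[ℤ] b) := by
        rw [TensorProduct.smul_tmul', smul_eq_mul, mul_one]
      rw [h1, map_smul, map_smul, hK b]

end Maps

/-- For a valuation `v` on `K`, the canonical graded `ℚ`-algebra map
`∧^*_ℚ(𝒦_{K|U_v}) → 𝒦_*(K|U_v)`, given by the identity in degree one, is an
isomorphism. -/
theorem exterior_algebra_iso (K : Type) [Field K] (A : ValuationSubring K) :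
    ∃ e : ExteriorAlgebra ℚ (KQ K A.unitGroup) ≃ₐ[ℚ] MilnorKQ K A.unitGroup,
      ∀ s : KQ K A.unitGroup, e (ExteriorAlgebra.ι ℚ s) = KQtoMilnor K A.unitGroup s := by
  refine ⟨AlgEquiv.ofAlgHom (eAlg A.unitGroup) (gAlg A) ?_ ?_, ?_⟩
  · exact AlgHom.ext fun z => eAlg_gAlg A z
  · apply ExteriorAlgebra.hom_ext
    apply LinearMap.ext
    intro s
    show gAlg A (eAlg A.unitGroup (ExteriorAlgebra.ι ℚ s)) = ExteriorAlgebra.ι ℚ s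
    rw [eAlg_ι, gAlg_KQtoMilnor]
  · intro s
    exact eAlg_ι A.unitGroup s

end Paper
end

section
/- Let k be a relatively algebraically closed subfield of K. The map sending L ∈ 𝔾(K|k) to the subspace 𝒦_{L|k} ⊆ 𝒦_{K|k} is an order isomorphism from 𝔾(K|k) onto 𝔾_𝒦(K|k); in particular 𝔾_𝒦(K|k) is a complete lattice. -/
/- Common definitions: Milnor K-theory of fields (possibly modulo a subgroup of `Kˣ`),
its rationalization, the dual space `𝒢_K` with the relation of alternating pairs,
and valuation-theoretic subspaces, following the paper. -/

set_option synthInstance.maxHeartbeats 400000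
set_option maxHeartbeats 1000000

open scoped TensorProduct

namespace Paper

section Aux

/-- If `1 ⊗ m` lies in the `ℚ`-span of the image of a `ℤ`-submodule `N`, then `m` is
torsion modulo `N`. -/
lemma tmul_mem_span_torsion {M : Type} [AddCommGroup M] (N : Submodule ℤ M) (m : M)
    (h : (1 : ℚ) ⊗ₜ[ℤ] m ∈
      Submodule.span ℚ ((fun a => (1 : ℚ) ⊗ₜ[ℤ] a) '' (N : Set M))) :
    ∃ n : ℤ, n ≠ 0 ∧ n • m ∈ N := by
  have hker : Submodule.span ℚ ((fun a => (1 : ℚ) ⊗ₜ[ℤ] a) '' (N : Set M)) ≤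
      LinearMap.ker (LinearMap.baseChange ℚ N.mkQ) := by
    rw [Submodule.span_le]
    rintro _ ⟨a, ha, rfl⟩
    simp only [SetLike.mem_coe, LinearMap.mem_ker, LinearMap.baseChange_tmul,
      Submodule.mkQ_apply]
    rw [(Submodule.Quotient.mk_eq_zero N).mpr ha, TensorProduct.tmul_zero]
  have h1 : (1 : ℚ) ⊗ₜ[ℤ] (Submodule.Quotient.mk m : M ⧸ N) = 0 := by
    have := hker h
    simpa only [LinearMap.mem_ker, LinearMap.baseChange_tmul, Submodule.mkQ_apply] using this
  haveI : IsLocalizedModule (nonZeroDivisors ℤ) (TensorProduct.mk ℤ ℚ (M ⧸ N) 1) :=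
    (isLocalizedModule_iff_isBaseChange (nonZeroDivisors ℤ) ℚ _).mpr
      (TensorProduct.isBaseChange ℤ (M ⧸ N) ℚ)
  have h2 : (TensorProduct.mk ℤ ℚ (M ⧸ N) 1) (Submodule.Quotient.mk m) = 0 := h1
  obtain ⟨s, hs⟩ :=
    (IsLocalizedModule.eq_zero_iff (nonZeroDivisors ℤ) (TensorProduct.mk ℤ ℚ (M ⧸ N) 1)).mp h2
  refine ⟨(s : ℤ), nonZeroDivisors.coe_ne_zero s, ?_⟩
  rw [← Submodule.Quotient.mk_eq_zero N]
  have : (s : ℤ) • (Submodule.Quotient.mk m : M ⧸ N) = 0 := hs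
  rw [← Submodule.Quotient.mk_smul] at this
  exact this

/-- The generating set of `subfieldSpan K k L` is the image of the submodule generated
by the units of `L` in the quotient. -/
lemma subfieldSpan_eq (K : Type) [Field K] (k L : Subfield K) :
    subfieldSpan K k L =
      Submodule.span ℚ ((fun a => (1 : ℚ) ⊗ₜ[ℤ] a) ''
        ((Submodule.map (subgroupToSubmodule K (subfieldUnits K k)).mkQ
          (subgroupToSubmodule K (subfieldUnits K L))) :
            Set (Additive Kˣ ⧸ subgroupToSubmodule K (subfieldUnits K k)))) := by
  unfold subfieldSpan
  congr 1
  ext s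
  constructor
  · rintro ⟨x, hx, rfl⟩
    exact ⟨Submodule.Quotient.mk (Additive.ofMul x),
      ⟨Additive.ofMul x, hx, by rw [Submodule.mkQ_apply]⟩, rfl⟩
  · rintro ⟨_, ⟨a, ha, rfl⟩, rfl⟩
    exact ⟨Additive.toMul a, ha, by rw [Submodule.mkQ_apply]; rfl⟩

/-- Key lemma: for `k ≤ L` with `L` relatively algebraically closed in `K`, a unit `x`
has its class in `𝒦_{L|k}` iff `x ∈ L`. -/
lemma symbQ_mem_subfieldSpan_iff (K : Type) [Field K] (k L : Subfield K)
    (hkL : k ≤ L) (hL : IsRelAlgClosed K L) (x : Kˣ) :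
    symbQ K (subfieldUnits K k) x ∈ subfieldSpan K k L ↔ (x : K) ∈ L := by
  constructor
  · intro h
    rw [subfieldSpan_eq] at h
    obtain ⟨n, hn, hmem⟩ := tmul_mem_span_torsion _ _ h
    -- unpack the torsion condition
    rw [show n • (Submodule.Quotient.mk (Additive.ofMul x) :
          Additive Kˣ ⧸ subgroupToSubmodule K (subfieldUnits K k)) =
        Submodule.Quotient.mk (n • Additive.ofMul x) from
        (Submodule.Quotient.mk_smul _ _ _).symm] at hmem
    obtain ⟨l, hl, hlm⟩ := hmem
    rw [Submodule.mkQ_apply] at hlm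
    have hdiff : l - n • Additive.ofMul x ∈ subgroupToSubmodule K (subfieldUnits K k) :=
      (Submodule.Quotient.eq _).mp hlm
    have ht : ((Additive.toMul l / x ^ n : Kˣ) : K) ∈ k := by
      have : Additive.toMul (l - n • Additive.ofMul x) ∈ subfieldUnits K k := hdiff
      rwa [toMul_sub, toMul_zsmul, toMul_ofMul] at this
    have hlL : ((Additive.toMul l : Kˣ) : K) ∈ L := hl
    have hxnL : ((x ^ n : Kˣ) : K) ∈ L := by
      have hxn : (x ^ n : Kˣ) = (Additive.toMul l / x ^ n)⁻¹ * Additive.toMul l := by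
        rw [inv_div, div_mul_cancel]
      rw [hxn, Units.val_mul]
      refine L.mul_mem ?_ hlL
      rw [Units.val_inv_eq_inv_val]
      exact L.inv_mem (hkL ht)
    have hpow : (x : K) ^ n ∈ L := by
      rwa [Units.val_zpow_eq_zpow_val] at hxnL
    -- pass to a natural-number power
    have hnat : (x : K) ^ (n.natAbs) ∈ L := by
      rcases Int.natAbs_eq n with he | he
      · have : (x : K) ^ ((n.natAbs : ℤ)) ∈ L := by rwa [← he]
        rwa [zpow_natCast] at this
      · have : (x : K) ^ ((n.natAbs : ℤ)) ∈ L := by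
          have : ((x : K) ^ n)⁻¹ ∈ L := L.inv_mem hpow
          rwa [← zpow_neg, he, neg_neg] at this
        rwa [zpow_natCast] at this
    have hpos : 0 < n.natAbs := Int.natAbs_pos.mpr hn
    -- algebraicity
    apply hL
    refine ⟨Polynomial.X ^ n.natAbs - Polynomial.C (⟨(x : K) ^ n.natAbs, hnat⟩ : L), ?_, ?_⟩
    · exact Polynomial.X_pow_sub_C_ne_zero hpos _
    · simp only [map_sub, Polynomial.aeval_X_pow, Polynomial.aeval_C]
      rw [sub_eq_zero]
      rfl
  · intro h
    exact Submodule.subset_span ⟨x, h, rfl⟩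

end Aux

/-- For a relatively algebraically closed subfield `k ⊆ K`, the map
`L ↦ 𝒦_{L|k}` is an order isomorphism from the lattice `𝔾(K|k)` of relatively
algebraically closed subextensions onto the poset `𝔾_𝒦(K|k)` of geometric subspaces of
`𝒦_{K|k}`. -/
theorem geometric_lattice_iso (K : Type) [Field K] (k : Subfield K)
    (hk : IsRelAlgClosed K k) :
    Function.Bijective
      (fun L : {L : Subfield K // k ≤ L ∧ IsRelAlgClosed K L} =>
        (⟨subfieldSpan K k L.1, L.1, L.2.1, L.2.2, rfl⟩ :
          {H : Submodule ℚ (KQ K (subfieldUnits K k)) //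
            ∃ L' : Subfield K, k ≤ L' ∧ IsRelAlgClosed K L' ∧ H = subfieldSpan K k L'})) ∧
    ∀ L1 L2 : {L : Subfield K // k ≤ L ∧ IsRelAlgClosed K L},
      L1 ≤ L2 ↔ subfieldSpan K k L1.1 ≤ subfieldSpan K k L2.1 := by
  have key : ∀ L1 L2 : {L : Subfield K // k ≤ L ∧ IsRelAlgClosed K L},
      subfieldSpan K k L1.1 ≤ subfieldSpan K k L2.1 → L1.1 ≤ L2.1 := by
    intro L1 L2 h x hx
    by_cases hx0 : x = 0
    · rw [hx0]; exact L2.1.zero_mem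
    · have hu : ((Units.mk0 x hx0 : Kˣ) : K) ∈ L1.1 := hx
      have h1 : symbQ K (subfieldUnits K k) (Units.mk0 x hx0) ∈ subfieldSpan K k L1.1 :=
        (symbQ_mem_subfieldSpan_iff K k L1.1 L1.2.1 L1.2.2 _).mpr hu
      exact (symbQ_mem_subfieldSpan_iff K k L2.1 L2.2.1 L2.2.2 _).mp (h h1)
  have mono : ∀ L1 L2 : {L : Subfield K // k ≤ L ∧ IsRelAlgClosed K L},
      L1.1 ≤ L2.1 → subfieldSpan K k L1.1 ≤ subfieldSpan K k L2.1 := by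
    intro L1 L2 h
    apply Submodule.span_mono
    rintro _ ⟨x, hx, rfl⟩
    exact ⟨x, h hx, rfl⟩
  constructor
  · constructor
    · intro L1 L2 hEq
      have hspan : subfieldSpan K k L1.1 = subfieldSpan K k L2.1 :=
        congrArg Subtype.val hEq
      exact Subtype.ext (le_antisymm (key L1 L2 (le_of_eq hspan))
        (key L2 L1 (le_of_eq hspan.symm)))
    · rintro ⟨H, L', h1, h2, h3⟩
      exact ⟨⟨L', h1, h2⟩, Subtype.ext h3.symm⟩
  · intro L1 L2
    exact ⟨fun h => mono L1 L2 h, fun h => key L1 L2 h⟩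

end Paper
end
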